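/- Let N = F_m ∘ ⋯ ∘ F_1: ℝⁿ → ℝⁿ be a composition of ReLU layer maps F_i = σ ∘ A_i with all layers of width n, and suppose at least one affine map A_i is non-invertible. Then for every point q in the image of N, the preimage N⁻¹({q}) is unbounded. -/

import Mathlib

open Matrix

/-- The composition of the first `k` ReLU layer maps of a feedforward network with layer
dimensions `d 0, d 1, d 2, …`, weight matrices `W` and biases `b`. -/
def forward (d : ℕ → ℕ) (W : ∀ k, Matrix (Fin (d (k + 1))) (Fin (d k)) ℝ)
    (b : ∀ k, Fin (d (k + 1)) → ℝ) : (k : ℕ) → (Fin (d 0) → ℝ) → Fin (d k) → ℝ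
  | 0, x => x
  | k + 1, x => fun i => max ((W k).mulVec (forward d W b k x) i + b k i) 0

/-- coordinatewise ReLU -/
def relu {n : ℕ} (x : Fin n → ℝ) : Fin n → ℝ := fun i => max (x i) 0

lemma relu_nonneg {n : ℕ} (x : Fin n → ℝ) (i : Fin n) : 0 ≤ relu x i := le_max_right _ _

lemma relu_eq_self {n : ℕ} {x : Fin n → ℝ} (h : ∀ i, 0 ≤ x i) : relu x = x := by
  funext i; exact max_eq_left (h i)

lemma relu_continuous {n : ℕ} : Continuous (relu (n := n)) := by
  unfold relu
  exact continuous_pi fun i => ((continuous_apply i)).max continuous_const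

lemma forward_succ {n : ℕ} (W : ℕ → Matrix (Fin n) (Fin n) ℝ) (b : ℕ → Fin n → ℝ)
    (k : ℕ) (x : Fin n → ℝ) :
    forward (fun _ => n) W b (k+1) x
      = relu (W k *ᵥ (forward (fun _ => n) W b k x) + b k) := rfl

lemma forward_shift {n : ℕ} (W : ℕ → Matrix (Fin n) (Fin n) ℝ) (b : ℕ → Fin n → ℝ)
    (k : ℕ) (x : Fin n → ℝ) :
    forward (fun _ => n) W b (k+1) x
      = forward (fun _ => n) (fun j => W (j+1)) (fun j => b (j+1)) k (relu (W 0 *ᵥ x + b 0)) := by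
  induction k with
  | zero => rfl
  | succ k ih =>
    rw [forward_succ, ih, forward_succ]

/-- A path starting at `u0`, moving to `relu u0` during `t ∈ [0,1]`, then following `tail`. -/
noncomputable def pathFrom {n : ℕ} (u0 : Fin n → ℝ) (tail : ℝ → (Fin n → ℝ)) : ℝ → (Fin n → ℝ) :=
  fun t => if t ≤ 1 then u0 + (max t 0) • (relu u0 - u0) else tail (t - 1)

lemma pathFrom_zero {n : ℕ} (u0 : Fin n → ℝ) (tail : ℝ → (Fin n → ℝ)) :
    pathFrom u0 tail 0 = u0 := by
  simp [pathFrom]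

lemma pathFrom_continuous {n : ℕ} (u0 : Fin n → ℝ) (tail : ℝ → (Fin n → ℝ))
    (hc : Continuous tail) (h0 : tail 0 = relu u0) : Continuous (pathFrom u0 tail) := by
  apply Continuous.if_le
  · exact continuous_const.add ((continuous_id.max continuous_const).smul continuous_const)
  · exact hc.comp (continuous_id.sub continuous_const)
  · exact continuous_id
  · exact continuous_const
  · intro t ht
    subst ht
    simp [h0]

lemma relu_pathFrom {n : ℕ} (u0 : Fin n → ℝ) (tail : ℝ → (Fin n → ℝ))
    (h0 : tail 0 = relu u0) (t : ℝ) (ht : 0 ≤ t) :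
    relu (pathFrom u0 tail t) = relu (tail (max (t-1) 0)) := by
  unfold pathFrom
  by_cases h1 : t ≤ 1
  · rw [if_pos h1]
    have hmax : max (t-1) 0 = 0 := max_eq_right (by linarith)
    rw [hmax, h0]
    funext i
    have hs0 : 0 ≤ max t 0 := le_max_right _ _
    have hs1 : max t 0 ≤ 1 := max_le h1 (by norm_num)
    by_cases hi : 0 ≤ u0 i
    · simp only [relu, Pi.add_apply, Pi.smul_apply, Pi.sub_apply, smul_eq_mul]
      rw [max_eq_left hi]
      simp [max_eq_left hi, hi]
    · push_neg at hi
      simp only [relu, Pi.add_apply, Pi.smul_apply, Pi.sub_apply, smul_eq_mul]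
      have hrhs : max (u0 i) 0 = 0 := max_eq_right hi.le
      rw [hrhs, max_self]
      apply max_eq_right
      nlinarith [hs0, hs1, hi.le]
  · rw [if_neg h1]
    push_neg at h1
    rw [max_eq_left (by linarith)]

lemma pathFrom_tail {n : ℕ} (u0 : Fin n → ℝ) (tail : ℝ → (Fin n → ℝ))
    (h0 : tail 0 = relu u0) (s : ℝ) (hs : 0 ≤ s) : pathFrom u0 tail (s + 1) = tail s := by
  unfold pathFrom
  rcases eq_or_lt_of_le hs with h | h
  · subst h
    rw [if_pos (by norm_num)]
    rw [← h0]
    norm_num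
  · rw [if_neg (by linarith)]
    norm_num

lemma mulVec_bound {n : ℕ} (M : Matrix (Fin n) (Fin n) ℝ) :
    ∃ C, 0 < C ∧ ∀ x : Fin n → ℝ, ‖M *ᵥ x‖ ≤ C * ‖x‖ := by
  obtain ⟨C, hC⟩ := (M.mulVecLin.toContinuousLinearMap :
      (Fin n → ℝ) →L[ℝ] (Fin n → ℝ)).isBoundedLinearMap.bound
  exact ⟨C, hC.1, fun x => by simpa using hC.2 x⟩

lemma mulVec_continuous {n : ℕ} (M : Matrix (Fin n) (Fin n) ℝ) {f : ℝ → (Fin n → ℝ)}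
    (hf : Continuous f) : Continuous fun t => M *ᵥ (f t) := by
  have : Continuous fun x : Fin n → ℝ => M *ᵥ x := by
    have := (M.mulVecLin.toContinuousLinearMap :
      (Fin n → ℝ) →L[ℝ] (Fin n → ℝ)).continuous
    exact this
  exact this.comp hf

lemma inv_mulVec_mulVec {n : ℕ} {M : Matrix (Fin n) (Fin n) ℝ} (h : M.det ≠ 0)
    (x : Fin n → ℝ) : M⁻¹ *ᵥ (M *ᵥ x) = x := by
  rw [Matrix.mulVec_mulVec, Matrix.nonsing_inv_mul _ (isUnit_iff_ne_zero.mpr h),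
    Matrix.one_mulVec]

lemma mulVec_inv_mulVec {n : ℕ} {M : Matrix (Fin n) (Fin n) ℝ} (h : M.det ≠ 0)
    (x : Fin n → ℝ) : M *ᵥ (M⁻¹ *ᵥ x) = x := by
  rw [Matrix.mulVec_mulVec, Matrix.mul_nonsing_inv _ (isUnit_iff_ne_zero.mpr h),
    Matrix.one_mulVec]

/-- relu of a point with one coordinate pushed negative, others fixed nonneg. -/
lemma relu_ray {n : ℕ} {q : Fin n → ℝ} (hq : ∀ i, 0 ≤ q i) {i0 : Fin n} (hq0 : q i0 = 0)
    {s : ℝ} (hs : 0 ≤ s) : relu (q - s • (Pi.single i0 1 : Fin n → ℝ)) = q := by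
  funext i
  by_cases hi : i = i0
  · subst hi
    simp [relu, hq0, Pi.single_apply, max_eq_right, hs]
  · simp [relu, Pi.single_apply, hi, max_eq_left (hq i)]

lemma key {n : ℕ} (k : ℕ) (W : ℕ → Matrix (Fin n) (Fin n) ℝ) (b : ℕ → Fin n → ℝ)
    (hsing : ∃ j, j < k ∧ (W j).det = 0) (u0 : Fin n → ℝ) :
    ∃ γ : ℝ → (Fin n → ℝ), Continuous γ ∧ γ 0 = u0 ∧
      (∀ t, 0 ≤ t → forward (fun _ => n) W b k (relu (γ t))
          = forward (fun _ => n) W b k (relu u0)) ∧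
      (∀ C : ℝ, ∃ t, 0 ≤ t ∧ C ≤ ‖γ t‖) := by
  induction k generalizing W b u0 with
  | zero => exact absurd hsing (by rintro ⟨j, hj, -⟩; omega)
  | succ k ih =>
    set y0 : Fin n → ℝ := relu u0 with hy0def
    have hy0 : ∀ i, 0 ≤ y0 i := relu_nonneg u0
    have hry0 : relu y0 = y0 := relu_eq_self hy0
    by_cases h0 : (W 0).det = 0
    · -- Case A : first layer singular
      obtain ⟨v, hv0, hvker⟩ := Matrix.exists_mulVec_eq_zero_iff.mpr h0
      have hval : ∀ z : Fin n → ℝ, W 0 *ᵥ z = W 0 *ᵥ y0 →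
          forward (fun _ => n) W b (k+1) z = forward (fun _ => n) W b (k+1) y0 := by
        intro z hz
        rw [forward_shift, forward_shift, hz]
      have hlineW : ∀ s : ℝ, W 0 *ᵥ (y0 + s • v) = W 0 *ᵥ y0 := by
        intro s
        rw [Matrix.mulVec_add, Matrix.mulVec_smul, hvker, smul_zero, add_zero]
      by_cases hvpos : ∀ i, 0 ≤ v i
      · -- A1 : ray inside the orthant
        obtain ⟨iv, hiv⟩ := Function.ne_iff.mp hv0
        have hivpos : 0 < v iv := lt_of_le_of_ne (hvpos iv) (Ne.symm hiv)
        set tail : ℝ → (Fin n → ℝ) := fun s => y0 + s • v with htaildef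
        have htail0 : tail 0 = relu u0 := by simp [htaildef, hy0def]
        refine ⟨pathFrom u0 tail, ?_, pathFrom_zero u0 tail, ?_, ?_⟩
        · exact pathFrom_continuous u0 tail
            (continuous_const.add (continuous_id.smul continuous_const)) htail0
        · intro t ht
          rw [relu_pathFrom u0 tail htail0 t ht]
          set s := max (t-1) 0 with hsdef
          have hs : 0 ≤ s := le_max_right _ _
          have hnn : ∀ i, 0 ≤ (tail s) i := fun i =>
            add_nonneg (hy0 i) (mul_nonneg hs (hvpos i))
          rw [show relu (tail s) = tail s from relu_eq_self hnn]
          exact hval _ (hlineW s)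
        · intro C
          set s := (max C 0 + 1) / v iv with hsdef
          have hs : 0 < s := div_pos (by positivity) hivpos
          refine ⟨s + 1, by linarith, ?_⟩
          rw [pathFrom_tail u0 tail htail0 s hs.le]
          have hcoord : (tail s) iv = y0 iv + (max C 0 + 1) := by
            simp only [htaildef, Pi.add_apply, Pi.smul_apply, smul_eq_mul]
            rw [hsdef, div_mul_cancel₀ _ (ne_of_gt hivpos)]
          calc C ≤ max C 0 + 1 := by linarith [le_max_left C 0]
            _ ≤ y0 iv + (max C 0 + 1) := by linarith [hy0 iv]
            _ ≤ |(tail s) iv| := by rw [hcoord]; exact le_abs_self _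
            _ ≤ ‖tail s‖ := by
                have := norm_le_pi_norm (tail s) iv
                simpa [Real.norm_eq_abs] using this
      · -- A2 : kernel direction exits the orthant
        push_neg at hvpos
        obtain ⟨i1, hi1⟩ := hvpos
        set F : Finset (Fin n) := Finset.univ.filter (fun i => v i < 0) with hFdef
        have hFne : F.Nonempty := ⟨i1, by simp [hFdef, hi1]⟩
        set sstar : ℝ := F.inf' hFne (fun i => y0 i / (-v i)) with hsstardef
        have hsstar0 : 0 ≤ sstar := by
          apply Finset.le_inf'
          intro i hiF
          have hvi : v i < 0 := by simpa [hFdef] using hiF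
          exact div_nonneg (hy0 i) (by linarith)
        obtain ⟨i0, hi0F, hi0eq⟩ := F.exists_mem_eq_inf' hFne (fun i => y0 i / (-v i))
        have hi0neg : v i0 < 0 := by simpa [hFdef] using hi0F
        have hline : ∀ s : ℝ, 0 ≤ s → s ≤ sstar → ∀ i, 0 ≤ (y0 + s • v) i := by
          intro s hs hss i
          simp only [Pi.add_apply, Pi.smul_apply, smul_eq_mul]
          rcases lt_or_ge (v i) 0 with hvi | hvi
          · have hiF : i ∈ F := by simp [hFdef, hvi]
            have h1 : sstar ≤ y0 i / (-v i) := Finset.inf'_le _ hiF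
            have h2 : s * (-v i) ≤ y0 i := by
              rw [← le_div_iff₀ (by linarith : (0:ℝ) < -v i)]
              linarith
            nlinarith
          · nlinarith [mul_nonneg hs hvi, hy0 i]
        set q : Fin n → ℝ := y0 + sstar • v with hqdef
        have hq : ∀ i, 0 ≤ q i := hline sstar hsstar0 le_rfl
        have hq0 : q i0 = 0 := by
          simp only [hqdef, Pi.add_apply, Pi.smul_apply, smul_eq_mul]
          rw [hsstardef, hi0eq]
          have hne : v i0 ≠ 0 := ne_of_lt hi0neg
          have h2 : y0 i0 / -v i0 * v i0 = -(y0 i0) := by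
            rw [div_neg, neg_mul, div_mul_cancel₀ _ hne]
          linarith
        set tail : ℝ → (Fin n → ℝ) :=
          fun s => if s ≤ sstar then y0 + s • v
            else q - (s - sstar) • (Pi.single i0 1 : Fin n → ℝ) with htaildef
        have htail0 : tail 0 = relu u0 := by
          simp only [htaildef, if_pos hsstar0]
          simp [hy0def]
        have htailc : Continuous tail := by
          apply Continuous.if_le
          · exact continuous_const.add (continuous_id.smul continuous_const)
          · exact continuous_const.sub ((continuous_id.sub continuous_const).smul
              continuous_const)
          · exact continuous_id
          · exact continuous_const
          · intro s hs
            subst hs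
            simp [hqdef]
        have hrelu_tail : ∀ s, 0 ≤ s → W 0 *ᵥ relu (tail s) = W 0 *ᵥ y0 := by
          intro s hs
          by_cases hss : s ≤ sstar
          · rw [htaildef]
            simp only [if_pos hss]
            rw [relu_eq_self (hline s hs hss)]
            exact hlineW s
          · rw [htaildef]
            simp only [if_neg hss]
            rw [relu_ray hq hq0 (by push_neg at hss; linarith)]
            exact hlineW sstar
        refine ⟨pathFrom u0 tail, pathFrom_continuous u0 tail htailc htail0,
          pathFrom_zero u0 tail, ?_, ?_⟩
        · intro t ht
          rw [relu_pathFrom u0 tail htail0 t ht]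
          exact hval _ (hrelu_tail _ (le_max_right _ _))
        · intro C
          set s := sstar + (max C 0 + 1) with hsdef
          have hs : 0 < s := by positivity
          refine ⟨s + 1, by linarith, ?_⟩
          rw [pathFrom_tail u0 tail htail0 s hs.le]
          have hns : ¬ s ≤ sstar := by rw [hsdef]; push_neg; linarith [le_max_right C 0]
          have hcoord : (tail s) i0 = -(max C 0 + 1) := by
            have hns' : ¬ sstar + (max C 0 + 1) ≤ sstar := hns
            simp only [htaildef, if_neg hns, if_neg hns', Pi.sub_apply, Pi.smul_apply, smul_eq_mul,
              Pi.single_eq_same, mul_one, hq0, hsdef]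
            ring
          calc C ≤ max C 0 + 1 := by linarith [le_max_left C 0]
            _ ≤ |(tail s) i0| := by rw [hcoord, abs_neg]; exact le_abs_self _
            _ ≤ ‖tail s‖ := by
                have := norm_le_pi_norm (tail s) i0
                simpa [Real.norm_eq_abs] using this
    · -- Case B : first layer invertible, singularity deeper
      obtain ⟨j, hj, hdet⟩ := hsing
      have hj0 : j ≠ 0 := fun h => h0 (h ▸ hdet)
      have hsing' : ∃ j', j' < k ∧ ((fun i => W (i+1)) j').det = 0 :=
        ⟨j - 1, by omega, by simpa [Nat.sub_add_cancel (Nat.one_le_iff_ne_zero.mpr hj0)] using hdet⟩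
      obtain ⟨γ', hc', hz', hv', hu'⟩ :=
        ih (fun i => W (i+1)) (fun i => b (i+1)) hsing' (W 0 *ᵥ y0 + b 0)
      set D : ℝ → (Fin n → ℝ) := fun t => (W 0)⁻¹ *ᵥ (γ' t - b 0) with hDdef
      have hDc : Continuous D := mulVec_continuous _ (hc'.sub continuous_const)
      have hD0 : D 0 = y0 := by
        rw [hDdef]
        simp only [hz', add_sub_cancel_right]
        exact inv_mulVec_mulVec h0 y0
      have hWD : ∀ t, W 0 *ᵥ D t + b 0 = γ' t := by
        intro t
        rw [hDdef]
        simp only [mulVec_inv_mulVec h0, sub_add_cancel]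
      have hvalB : ∀ r, 0 ≤ r → forward (fun _ => n) W b (k+1) (D r)
          = forward (fun _ => n) W b (k+1) y0 := by
        intro r hr
        rw [forward_shift, forward_shift, hWD r]
        exact hv' r hr
      set K : Set ℝ := {s | 0 ≤ s ∧ ∀ r, 0 ≤ r → r ≤ s → ∀ i, 0 ≤ D r i} with hKdef
      have hK0 : (0:ℝ) ∈ K := by
        refine ⟨le_rfl, fun r hr hr0 i => ?_⟩
        have : r = 0 := le_antisymm hr0 hr
        subst this
        rw [hD0]
        exact hy0 i
      by_cases hbdd : BddAbove K
      · -- K bounded : the path exits the orthant, giving a boundary point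
        set t1 : ℝ := sSup K with ht1def
        have ht1nn : 0 ≤ t1 := le_csSup hbdd hK0
        have hgood_lt : ∀ r, 0 ≤ r → r < t1 → ∀ i, 0 ≤ D r i := by
          intro r hr hrt1 i
          obtain ⟨s, hsK, hrs⟩ := exists_lt_of_lt_csSup ⟨0, hK0⟩ hrt1
          exact hsK.2 r hr hrs.le i
        have hgood_t1 : ∀ i, 0 ≤ D t1 i := by
          intro i
          by_contra hneg
          push_neg at hneg
          have hopen : IsOpen {t : ℝ | D t i < 0} :=
            isOpen_lt ((continuous_apply i).comp hDc) continuous_const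
          rcases eq_or_lt_of_le ht1nn with h | h
          · rw [← h] at hneg
            rw [hD0] at hneg
            exact absurd (hy0 i) (not_le.mpr hneg)
          · obtain ⟨ε, hε, hball⟩ := Metric.isOpen_iff.mp hopen t1 hneg
            set r : ℝ := max 0 (t1 - ε/2) with hrdef
            have hr0 : 0 ≤ r := le_max_left _ _
            have hrlt : r < t1 := by
              rw [hrdef]
              apply max_lt h
              linarith
            have hrball : r ∈ Metric.ball t1 ε := by
              rw [Metric.mem_ball, Real.dist_eq, abs_lt]
              constructor
              · have : t1 - ε/2 ≤ r := le_max_right _ _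
                linarith
              · linarith
            have := hball hrball
            exact absurd (hgood_lt r hr0 hrlt i) (not_le.mpr this)
        have hgood : ∀ r, 0 ≤ r → r ≤ t1 → ∀ i, 0 ≤ D r i := by
          intro r hr hrt1 i
          rcases eq_or_lt_of_le hrt1 with h | h
          · subst h; exact hgood_t1 i
          · exact hgood_lt r hr h i
        have hzero : ∃ i0, D t1 i0 = 0 := by
          by_contra hz
          push_neg at hz
          have hpos : ∀ i, 0 < D t1 i := fun i => lt_of_le_of_ne (hgood_t1 i) (Ne.symm (hz i))
          have hopenU : IsOpen {x : Fin n → ℝ | ∀ i, 0 < x i} := by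
            have : {x : Fin n → ℝ | ∀ i, 0 < x i} = ⋂ i, {x | 0 < x i} := by ext x; simp
            rw [this]
            exact isOpen_iInter_of_finite fun i => isOpen_lt continuous_const (continuous_apply i)
          have hopen : IsOpen {t : ℝ | ∀ i, 0 < D t i} := hopenU.preimage hDc
          obtain ⟨ε, hε, hball⟩ := Metric.isOpen_iff.mp hopen t1 hpos
          have hmem : t1 + ε/2 ∈ K := by
            refine ⟨by linarith, fun r hr hrle i => ?_⟩
            rcases le_or_gt r t1 with h | h
            · exact hgood r hr h i
            · have : r ∈ Metric.ball t1 ε := by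
                rw [Metric.mem_ball, Real.dist_eq, abs_lt]
                constructor <;> linarith
              exact (hball this i).le
          have := le_csSup hbdd hmem
          linarith
        obtain ⟨i0, hi0⟩ := hzero
        set p : Fin n → ℝ := D t1 with hpdef
        have hp : ∀ i, 0 ≤ p i := hgood_t1
        set tail : ℝ → (Fin n → ℝ) :=
          fun s => if s ≤ t1 then D s
            else p - (s - t1) • (Pi.single i0 1 : Fin n → ℝ) with htaildef
        have htail0 : tail 0 = relu u0 := by
          simp only [htaildef, if_pos ht1nn, hD0, hy0def]
        have htailc : Continuous tail := by
          apply Continuous.if_le hDc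
          · exact continuous_const.sub ((continuous_id.sub continuous_const).smul
              continuous_const)
          · exact continuous_id
          · exact continuous_const
          · intro s hs
            subst hs
            simp [hpdef]
        refine ⟨pathFrom u0 tail, pathFrom_continuous u0 tail htailc htail0,
          pathFrom_zero u0 tail, ?_, ?_⟩
        · intro t ht
          rw [relu_pathFrom u0 tail htail0 t ht]
          set s := max (t-1) 0 with hsdef
          have hs : 0 ≤ s := le_max_right _ _
          by_cases hss : s ≤ t1
          · rw [htaildef]
            simp only [if_pos hss]
            rw [relu_eq_self (hgood s hs hss)]
            exact hvalB s hs
          · rw [htaildef]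
            simp only [if_neg hss]
            rw [relu_ray hp hi0 (by push_neg at hss; linarith)]
            exact hvalB t1 ht1nn
        · intro C
          set s := t1 + (max C 0 + 1) with hsdef
          have hs : 0 < s := by positivity
          refine ⟨s + 1, by linarith, ?_⟩
          rw [pathFrom_tail u0 tail htail0 s hs.le]
          have hns : ¬ s ≤ t1 := by rw [hsdef]; push_neg; linarith [le_max_right C 0]
          have hcoord : (tail s) i0 = -(max C 0 + 1) := by
            have hns' : ¬ t1 + (max C 0 + 1) ≤ t1 := hns
            simp only [htaildef, if_neg hns, if_neg hns', Pi.sub_apply, Pi.smul_apply, smul_eq_mul,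
              Pi.single_eq_same, mul_one, hi0, hsdef]
            ring
          calc C ≤ max C 0 + 1 := by linarith [le_max_left C 0]
            _ ≤ |(tail s) i0| := by rw [hcoord, abs_neg]; exact le_abs_self _
            _ ≤ ‖tail s‖ := by
                have := norm_le_pi_norm (tail s) i0
                simpa [Real.norm_eq_abs] using this
      · -- K unbounded : the pulled-back path stays in the orthant forever
        have hall : ∀ s, 0 ≤ s → ∀ i, 0 ≤ D s i := by
          intro s hs i
          rw [not_bddAbove_iff] at hbdd
          obtain ⟨s', hs'K, hss'⟩ := hbdd s
          exact hs'K.2 s hs hss'.le i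
        have htail0 : D 0 = relu u0 := hD0
        refine ⟨pathFrom u0 D, pathFrom_continuous u0 D hDc htail0,
          pathFrom_zero u0 D, ?_, ?_⟩
        · intro t ht
          rw [relu_pathFrom u0 D htail0 t ht]
          have hs : 0 ≤ max (t-1) 0 := le_max_right _ _
          rw [relu_eq_self (hall _ hs)]
          exact hvalB _ hs
        · intro C
          obtain ⟨C0, hC0, hC0b⟩ := mulVec_bound (W 0)
          obtain ⟨t', ht', hgam⟩ := hu' (C0 * max C 0 + ‖b 0‖)
          refine ⟨t' + 1, by linarith, ?_⟩
          rw [pathFrom_tail u0 D htail0 t' ht']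
          have h1 : ‖γ' t'‖ ≤ C0 * ‖D t'‖ + ‖b 0‖ := by
            calc ‖γ' t'‖ = ‖W 0 *ᵥ D t' + b 0‖ := by rw [hWD]
              _ ≤ ‖W 0 *ᵥ D t'‖ + ‖b 0‖ := norm_add_le _ _
              _ ≤ C0 * ‖D t'‖ + ‖b 0‖ := by linarith [hC0b (D t')]
          have h2 : C0 * max C 0 ≤ C0 * ‖D t'‖ := by linarith
          have h3 : max C 0 ≤ ‖D t'‖ := le_of_mul_le_mul_left h2 hC0
          linarith [le_max_left C 0]

/-- Let `N = F_m ∘ ⋯ ∘ F₁ : ℝⁿ → ℝⁿ` be a composition of ReLU layer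
maps `F_i = σ ∘ A_i`, all of width `n`, and suppose some weight matrix `W_i` (with
`i < m`) is singular (so `A_i` is non-invertible). Then every point of the image of `N`
has unbounded preimage. -/
theorem singular_layer_unbounded_fibers {n : ℕ} (m : ℕ)
    (W : ℕ → Matrix (Fin n) (Fin n) ℝ) (b : ℕ → Fin n → ℝ)
    (hsing : ∃ i, i < m ∧ (W i).det = 0)
    (N : (Fin n → ℝ) → (Fin n → ℝ))
    (hN : N = forward (fun _ => n) W b m) :
    ∀ q ∈ Set.range N, ¬ Bornology.IsBounded (N ⁻¹' {q}) := by
  intro q hq hbounded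
  obtain ⟨x, hx⟩ := hq
  obtain ⟨i, him, hdet⟩ := hsing
  obtain ⟨C, hC⟩ := hbounded.exists_norm_le
  obtain ⟨k, rfl⟩ : ∃ k, m = k + 1 := ⟨m - 1, by omega⟩
  subst hN
  by_cases h0 : (W 0).det = 0
  · obtain ⟨v, hv0, hvker⟩ := Matrix.exists_mulVec_eq_zero_iff.mpr h0
    obtain ⟨iv, hiv⟩ := Function.ne_iff.mp hv0
    have habs : 0 < |v iv| := abs_pos.mpr hiv
    have hmem : ∀ t : ℝ, x + t • v ∈ (forward (fun _ => n) W b (k+1)) ⁻¹' {q} := by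
      intro t
      simp only [Set.mem_preimage, Set.mem_singleton_iff]
      rw [← hx, forward_shift, forward_shift, Matrix.mulVec_add, Matrix.mulVec_smul,
        hvker, smul_zero, add_zero]
    set t := (|C| + ‖x‖ + 1) / |v iv| with htdef
    have hle := hC _ (hmem t)
    have ht : 0 < t := div_pos (by positivity) habs
    have hcoord : t * |v iv| - |x iv| ≤ |(x + t • v) iv| := by
      have : |t * v iv| - |x iv| ≤ |x iv + t * v iv| := by
        have he : t * v iv = (x iv + t * v iv) + (-(x iv)) := by ring
        have h2 : |(x iv + t * v iv) + (-(x iv))| ≤ |x iv + t * v iv| + |-(x iv)| :=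
          abs_add_le _ _
        rw [← he, abs_neg] at h2
        linarith
      simpa [abs_mul, abs_of_pos ht, Pi.add_apply, Pi.smul_apply, smul_eq_mul,
        add_comm] using this
    have htv : t * |v iv| = |C| + ‖x‖ + 1 := div_mul_cancel₀ _ (ne_of_gt habs)
    have hxiv : |x iv| ≤ ‖x‖ := by
      have := norm_le_pi_norm x iv
      simpa [Real.norm_eq_abs] using this
    have hnorm : |(x + t • v) iv| ≤ ‖x + t • v‖ := by
      have := norm_le_pi_norm (x + t • v) iv
      simpa [Real.norm_eq_abs] using this
    have : |C| + 1 - ‖x‖ + ‖x‖ ≤ C + ‖x‖ := by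
      calc |C| + 1 - ‖x‖ + ‖x‖ = t * |v iv| - ‖x‖ := by rw [htv]; ring
        _ ≤ t * |v iv| - |x iv| := by linarith
        _ ≤ ‖x + t • v‖ := le_trans hcoord hnorm
        _ ≤ C + ‖x‖ := by linarith [norm_nonneg x]
    linarith [le_abs_self C]
  · have hi0 : i ≠ 0 := fun h => h0 (h ▸ hdet)
    have hsing' : ∃ j, j < k ∧ ((fun l => W (l+1)) j).det = 0 :=
      ⟨i - 1, by omega, by simpa [Nat.sub_add_cancel (Nat.one_le_iff_ne_zero.mpr hi0)] using hdet⟩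
    obtain ⟨γ, hcont, hzero, hval, hunb⟩ :=
      key k (fun l => W (l+1)) (fun l => b (l+1)) hsing' (W 0 *ᵥ x + b 0)
    have hmem : ∀ t : ℝ, 0 ≤ t →
        (W 0)⁻¹ *ᵥ (γ t - b 0) ∈ (forward (fun _ => n) W b (k+1)) ⁻¹' {q} := by
      intro t ht
      simp only [Set.mem_preimage, Set.mem_singleton_iff]
      rw [← hx, forward_shift, forward_shift]
      rw [mulVec_inv_mulVec h0, sub_add_cancel]
      exact hval t ht
    obtain ⟨C0, hC0, hC0b⟩ := mulVec_bound (W 0)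
    obtain ⟨t, ht, hg⟩ := hunb (C0 * C + ‖b 0‖ + 1)
    have hle := hC _ (hmem t ht)
    have h1 : ‖γ t‖ ≤ C0 * ‖(W 0)⁻¹ *ᵥ (γ t - b 0)‖ + ‖b 0‖ := by
      have heq : γ t = W 0 *ᵥ ((W 0)⁻¹ *ᵥ (γ t - b 0)) + b 0 := by
        rw [mulVec_inv_mulVec h0, sub_add_cancel]
      calc ‖γ t‖ = ‖W 0 *ᵥ ((W 0)⁻¹ *ᵥ (γ t - b 0)) + b 0‖ := by rw [← heq]
        _ ≤ ‖W 0 *ᵥ ((W 0)⁻¹ *ᵥ (γ t - b 0))‖ + ‖b 0‖ := norm_add_le _ _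
        _ ≤ C0 * ‖(W 0)⁻¹ *ᵥ (γ t - b 0)‖ + ‖b 0‖ := by
            linarith [hC0b ((W 0)⁻¹ *ᵥ (γ t - b 0))]
    nlinarith
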